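/- Let H⁺(x,y,z) = (1−x²)(1−xz) − y·x²·(1+xz) and fix reals 0 < ρ < 1 and 0 < δ < 2(1−ρ). Define x* = √(1 − 2ρ/(2−δ)), z* = (√(ρ²+δ²) − ρ)/(x*·δ), and y* = 2(√(ρ²+δ²) − δ)/(2 − δ − 2ρ). Then x*, y*, z* > 0, H⁺(x*,y*,z*) = 0, and at the point (x*,y*,z*) the proportionality relations (x·∂H⁺/∂x)/2 = (y·∂H⁺/∂y)/ρ = (z·∂H⁺/∂z)/δ hold. -/

import Mathlib

open MvPolynomial

/-- `H⁺(x,y,z) = (1 − x²)(1 − xz) − y·x²·(1 + xz)` as a polynomial in three variables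
(variable `0` is `x`, `1` is `y`, `2` is `z`). -/
noncomputable def Hpos : MvPolynomial (Fin 3) ℝ :=
  (1 - X 0 ^ 2) * (1 - X 0 * X 2) - X 1 * X 0 ^ 2 * (1 + X 0 * X 2)

/-- The explicit point `(x*, y*, z*)` is positive, lies on `H⁺ = 0`, and satisfies the
critical-point proportionality relations `(x H⁺_x)/2 = (y H⁺_y)/ρ = (z H⁺_z)/δ`. -/
theorem stmt11 (ρ δ : ℝ) (hρ0 : 0 < ρ) (hρ1 : ρ < 1) (hδ0 : 0 < δ)
    (hδ : δ < 2 * (1 - ρ)) :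
    let xs : ℝ := Real.sqrt (1 - 2 * ρ / (2 - δ))
    let zs : ℝ := (Real.sqrt (ρ ^ 2 + δ ^ 2) - ρ) / (xs * δ)
    let ys : ℝ := 2 * (Real.sqrt (ρ ^ 2 + δ ^ 2) - δ) / (2 - δ - 2 * ρ)
    0 < xs ∧ 0 < ys ∧ 0 < zs ∧
    eval ![xs, ys, zs] Hpos = 0 ∧
    (xs * eval ![xs, ys, zs] (pderiv 0 Hpos)) / 2
      = (ys * eval ![xs, ys, zs] (pderiv 1 Hpos)) / ρ ∧
    (ys * eval ![xs, ys, zs] (pderiv 1 Hpos)) / ρ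
      = (zs * eval ![xs, ys, zs] (pderiv 2 Hpos)) / δ := by
  intro xs zs ys
  have h2δ : (0:ℝ) < 2 - δ := by linarith
  have hc : (0:ℝ) < 2 - δ - 2 * ρ := by linarith
  set s : ℝ := Real.sqrt (ρ ^ 2 + δ ^ 2) with hsdef
  have hxdef : xs = Real.sqrt (1 - 2 * ρ / (2 - δ)) := rfl
  have hzdef : zs = (s - ρ) / (xs * δ) := rfl
  have hydef : ys = 2 * (s - δ) / (2 - δ - 2 * ρ) := rfl
  have hfrac : (0:ℝ) < 1 - 2 * ρ / (2 - δ) := by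
    have : 2 * ρ / (2 - δ) < 1 := (div_lt_one h2δ).mpr (by linarith)
    linarith
  have hx0 : 0 < xs := by rw [hxdef]; exact Real.sqrt_pos.mpr hfrac
  have hs2 : s ^ 2 = ρ ^ 2 + δ ^ 2 := Real.sq_sqrt (by positivity)
  have hsρ : ρ < s := by
    rw [hsdef]
    exact (Real.lt_sqrt hρ0.le).mpr (by nlinarith)
  have hsδ : δ < s := by
    rw [hsdef]
    exact (Real.lt_sqrt hδ0.le).mpr (by nlinarith)
  have hy0 : 0 < ys := by
    rw [hydef]
    exact div_pos (by linarith) hc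
  have hz0 : 0 < zs := by
    rw [hzdef]
    exact div_pos (by linarith) (by positivity)
  have hx2 : xs ^ 2 = (2 - δ - 2 * ρ) / (2 - δ) := by
    rw [hxdef, Real.sq_sqrt hfrac.le]
    field_simp
  have hxz : xs * zs = (s - ρ) / δ := by
    rw [hzdef]
    field_simp
  have hQ : ys * xs ^ 2 = 2 * (s - δ) / (2 - δ) := by
    rw [hydef, hx2]
    field_simp
  refine ⟨hx0, hy0, hz0, ?_, ?_, ?_⟩
  · have hH : eval ![xs, ys, zs] Hpos
        = (1 - xs ^ 2) * (1 - xs * zs) - (ys * xs ^ 2) * (1 + xs * zs) := by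
      simp [Hpos]
    rw [hH, hQ, hxz, hx2]
    field_simp
    linear_combination (-2 : ℝ) * hs2
  · have hH1 : xs * eval ![xs, ys, zs] (pderiv 0 Hpos)
        = -2 * xs ^ 2 * (1 - xs * zs) - (xs * zs) * (1 - xs ^ 2)
          - 2 * (ys * xs ^ 2) * (1 + xs * zs) - (ys * xs ^ 2) * (xs * zs) := by
      simp [Hpos, pderiv_mul, pderiv_one, pderiv_X, pderiv_pow, map_sub, map_add, map_mul]
      ring
    have hH2 : ys * eval ![xs, ys, zs] (pderiv 1 Hpos)
        = -((ys * xs ^ 2) * (1 + xs * zs)) := by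
      simp [Hpos, pderiv_mul, pderiv_one, pderiv_X, pderiv_pow, map_sub, map_add, map_mul]
      ring
    rw [hH1, hH2, hQ, hxz, hx2]
    field_simp
    linear_combination (4 - 6*ρ) * hs2
  · have hH2 : ys * eval ![xs, ys, zs] (pderiv 1 Hpos)
        = -((ys * xs ^ 2) * (1 + xs * zs)) := by
      simp [Hpos, pderiv_mul, pderiv_one, pderiv_X, pderiv_pow, map_sub, map_add, map_mul]
      ring
    have hH3 : zs * eval ![xs, ys, zs] (pderiv 2 Hpos)
        = -((xs * zs) * (1 - xs ^ 2)) - (ys * xs ^ 2) * (xs * zs) := by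
      simp [Hpos, pderiv_mul, pderiv_one, pderiv_X, pderiv_pow, map_sub, map_add, map_mul]
      ring
    rw [hH2, hH3, hQ, hxz, hx2]
    field_simp
    linear_combination 2 * (ρ-δ) * hs2
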